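/- In the $(2,0;1,1)$ urn process with $i \geq 1$ initial black balls and $1$ initial white ball, letting $W_n$ be the number of white balls after $n$ draws, one has $\mathbb{E}[W_n^2] = 2\,\frac{i+2n+1}{i+1} - \mathbb{E}[W_n]$, and consequently $(2 - \sqrt{\pi})\,\frac{i+2n+1}{i+1} \leq \mathbb{E}[W_n^2] \leq 2\,\frac{i+2n+1}{i+1}$. -/

import Mathlib

open Real MeasureTheory

lemma urn_repr_sum {Ω : Type*} (W : Ω → ℕ) (m : ℕ) (hb : ∀ ω, W ω < m)
    (g : ℕ → ℝ) (ω : Ω) :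
    g (W ω) = ∑ w ∈ Finset.range m,
      Set.indicator {ω' | W ω' = w} (fun _ => g w) ω := by
  rw [Finset.sum_eq_single (W ω)]
  · rw [Set.indicator_of_mem]
    exact rfl
  · intro b _ hb'
    apply Set.indicator_of_notMem
    simp only [Set.mem_setOf_eq]
    exact fun h => hb' h.symm
  · intro h; exact absurd (Finset.mem_range.2 (hb ω)) h

lemma urn_integral_comp {Ω : Type*} [MeasurableSpace Ω] (P : Measure Ω)
    [IsProbabilityMeasure P] (W : Ω → ℕ) (hW : Measurable W) (m : ℕ)
    (hb : ∀ ω, W ω < m) (g : ℕ → ℝ) :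
    Integrable (fun ω => g (W ω)) P ∧
    ∫ ω, g (W ω) ∂P = ∑ w ∈ Finset.range m, g w * (P {ω | W ω = w}).toReal := by
  have hmeas : ∀ w : ℕ, MeasurableSet {ω | W ω = w} := fun w =>
    hW (measurableSet_singleton w)
  have hfun : (fun ω => g (W ω)) = fun ω => ∑ w ∈ Finset.range m,
      Set.indicator {ω' | W ω' = w} (fun _ => g w) ω :=
    funext fun ω => urn_repr_sum W m hb g ω
  have hint : ∀ w ∈ Finset.range m,
      Integrable (fun ω => Set.indicator {ω' | W ω' = w} (fun _ => g w) ω) P := by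
    intro w _
    exact (integrable_const (g w)).indicator (hmeas w)
  constructor
  · rw [hfun]; exact integrable_finset_sum _ hint
  · rw [hfun, integral_finset_sum _ hint]
    refine Finset.sum_congr rfl fun w _ => ?_
    rw [integral_indicator_const _ (hmeas w), smul_eq_mul, mul_comm]
    rfl

theorem urn_second_moment {Ω : Type*} [MeasurableSpace Ω] (P : Measure Ω)
    [IsProbabilityMeasure P] (i : ℕ) (hi : 1 ≤ i)
    (W : ℕ → Ω → ℕ) (hWm : ∀ n, Measurable (W n))
    (hW0 : ∀ ω, W 0 ω = 1)
    (hstep : ∀ n ω, W (n+1) ω = W n ω ∨ W (n+1) ω = W n ω + 1)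
    (hcond : ∀ n w, P {ω | W (n+1) ω = w + 1 ∧ W n ω = w} =
      ENNReal.ofReal ((w : ℝ) / ((i:ℝ) + 2*(n:ℝ) + 1)) * P {ω | W n ω = w}) :
    ∀ n : ℕ,
      (∫ ω, (W n ω : ℝ)^2 ∂P =
        2 * (((i:ℝ) + 2*(n:ℝ) + 1) / ((i:ℝ) + 1)) - ∫ ω, (W n ω : ℝ) ∂P) ∧
      ((2 - Real.sqrt π) * (((i:ℝ) + 2*(n:ℝ) + 1) / ((i:ℝ) + 1)) ≤
        ∫ ω, (W n ω : ℝ)^2 ∂P) ∧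
      (∫ ω, (W n ω : ℝ)^2 ∂P ≤ 2 * (((i:ℝ) + 2*(n:ℝ) + 1) / ((i:ℝ) + 1))) := by
  have hi1 : (0:ℝ) < (i:ℝ) + 1 := by positivity
  have hbound : ∀ n ω, W n ω < n + 2 := by
    intro n
    induction n with
    | zero => intro ω; simp [hW0 ω]
    | succ n ih =>
      intro ω
      have := ih ω
      rcases hstep n ω with h | h <;> omega
  -- key identity for D_n = W_n^2 + W_n
  have hD : ∀ n, ∫ ω, ((W n ω : ℝ)^2 + (W n ω : ℝ)) ∂P =
      2 * (((i:ℝ) + 2*(n:ℝ) + 1) / ((i:ℝ) + 1)) := by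
    intro n
    induction n with
    | zero =>
      have h1 : (fun ω => ((W 0 ω : ℝ)^2 + (W 0 ω : ℝ))) = fun _ => (2:ℝ) := by
        funext ω; rw [hW0 ω]; norm_num
      rw [h1, integral_const, measureReal_def, measure_univ]
      simp
      field_simp
      exact hi1.ne'
    | succ n ih =>
      set c : ℝ := (i:ℝ) + 2*(n:ℝ) + 1 with hcdef
      have hc : (0:ℝ) < c := by positivity
      have hms : ∀ w : ℕ, MeasurableSet {ω | W (n+1) ω = w+1 ∧ W n ω = w} := fun w =>
        (hWm (n+1) (measurableSet_singleton (w+1))).inter (hWm n (measurableSet_singleton w))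
      -- pointwise decomposition
      have hpt : ∀ ω, ((W (n+1) ω : ℝ)^2 + (W (n+1) ω : ℝ)) =
          ((W n ω : ℝ)^2 + (W n ω : ℝ)) + ∑ w ∈ Finset.range (n+2),
            Set.indicator {ω' | W (n+1) ω' = w+1 ∧ W n ω' = w}
              (fun _ => 2*((w:ℝ)+1)) ω := by
        intro ω
        rcases hstep n ω with h | h
        · have hz : ∑ w ∈ Finset.range (n+2),
              Set.indicator {ω' | W (n+1) ω' = w+1 ∧ W n ω' = w}
                (fun _ => 2*((w:ℝ)+1)) ω = 0 := by
            refine Finset.sum_eq_zero fun w _ => ?_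
            apply Set.indicator_of_notMem
            simp only [Set.mem_setOf_eq]
            rintro ⟨h1, h2⟩
            omega
          rw [hz, h]; ring
        · have hz : ∑ w ∈ Finset.range (n+2),
              Set.indicator {ω' | W (n+1) ω' = w+1 ∧ W n ω' = w}
                (fun _ => 2*((w:ℝ)+1)) ω = 2*((W n ω : ℝ)+1) := by
            rw [Finset.sum_eq_single (W n ω)]
            · rw [Set.indicator_of_mem]
              exact ⟨h, rfl⟩
            · intro b _ hb'
              apply Set.indicator_of_notMem
              simp only [Set.mem_setOf_eq]
              rintro ⟨h1, h2⟩
              exact hb' h2.symm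
            · intro hmem
              exact absurd (Finset.mem_range.2 (hbound n ω)) hmem
          rw [hz, h]
          push_cast
          ring
      obtain ⟨hintD, heqD⟩ := urn_integral_comp P (W n) (hWm n) (n+2) (hbound n)
        (fun w => (w:ℝ)^2 + (w:ℝ))
      have hintInd : ∀ w ∈ Finset.range (n+2),
          Integrable (fun ω => Set.indicator {ω' | W (n+1) ω' = w+1 ∧ W n ω' = w}
            (fun _ => 2*((w:ℝ)+1)) ω) P := fun w _ =>
        (integrable_const _).indicator (hms w)
      have hintSum : Integrable (fun ω => ∑ w ∈ Finset.range (n+2),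
          Set.indicator {ω' | W (n+1) ω' = w+1 ∧ W n ω' = w}
            (fun _ => 2*((w:ℝ)+1)) ω) P := integrable_finset_sum _ hintInd
      have hfun : (fun ω => ((W (n+1) ω : ℝ)^2 + (W (n+1) ω : ℝ))) =
          fun ω => ((W n ω : ℝ)^2 + (W n ω : ℝ)) + ∑ w ∈ Finset.range (n+2),
            Set.indicator {ω' | W (n+1) ω' = w+1 ∧ W n ω' = w}
              (fun _ => 2*((w:ℝ)+1)) ω := funext hpt
      rw [hfun, integral_add hintD hintSum, integral_finset_sum _ hintInd]
      have hterm : ∀ w ∈ Finset.range (n+2),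
          ∫ ω, Set.indicator {ω' | W (n+1) ω' = w+1 ∧ W n ω' = w}
            (fun _ => 2*((w:ℝ)+1)) ω ∂P =
          (2/c) * (((w:ℝ)^2 + (w:ℝ)) * (P {ω | W n ω = w}).toReal) := by
        intro w _
        rw [integral_indicator_const _ (hms w), measureReal_def, hcond n w, smul_eq_mul]
        rw [ENNReal.toReal_mul, ENNReal.toReal_ofReal (by positivity : (0:ℝ) ≤ (w:ℝ)/c)]
        field_simp
      rw [Finset.sum_congr rfl hterm, ← Finset.mul_sum, ← heqD, ih]
      have hin : ((i:ℝ) + 2*((n:ℝ)+1) + 1) = c + 2 := by rw [hcdef]; ring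
      push_cast
      rw [hin]
      field_simp
  -- now the main statement
  intro n
  obtain ⟨hint2, heq2⟩ := urn_integral_comp P (W n) (hWm n) (n+2) (hbound n)
    (fun w => (w:ℝ)^2)
  obtain ⟨hint1, heq1⟩ := urn_integral_comp P (W n) (hWm n) (n+2) (hbound n)
    (fun w => (w:ℝ))
  obtain ⟨hintD, heqD⟩ := urn_integral_comp P (W n) (hWm n) (n+2) (hbound n)
    (fun w => (w:ℝ)^2 + (w:ℝ))
  have hsplit : ∫ ω, ((W n ω : ℝ)^2 + (W n ω : ℝ)) ∂P =
      (∫ ω, (W n ω : ℝ)^2 ∂P) + ∫ ω, (W n ω : ℝ) ∂P := by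
    rw [heq2, heq1, heqD, ← Finset.sum_add_distrib]
    exact Finset.sum_congr rfl fun w _ => by ring
  have hkey : ∫ ω, (W n ω : ℝ)^2 ∂P =
      2 * (((i:ℝ) + 2*(n:ℝ) + 1) / ((i:ℝ) + 1)) - ∫ ω, (W n ω : ℝ) ∂P := by
    have := hD n
    linarith [hsplit]
  have hEnn : (0:ℝ) ≤ ∫ ω, (W n ω : ℝ) ∂P := by
    rw [heq1]
    exact Finset.sum_nonneg fun w _ => mul_nonneg (by positivity) ENNReal.toReal_nonneg
  have hle : ∫ ω, (W n ω : ℝ) ∂P ≤ ∫ ω, (W n ω : ℝ)^2 ∂P := by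
    rw [heq1, heq2]
    refine Finset.sum_le_sum fun w _ => ?_
    refine mul_le_mul_of_nonneg_right ?_ ENNReal.toReal_nonneg
    exact_mod_cast Nat.le_self_pow two_ne_zero w
  have hr : (1:ℝ) ≤ ((i:ℝ) + 2*(n:ℝ) + 1) / ((i:ℝ) + 1) := by
    rw [le_div_iff₀ hi1]
    have : (0:ℝ) ≤ (n:ℝ) := Nat.cast_nonneg n
    linarith
  have hsq : (1:ℝ) ≤ Real.sqrt π := by
    have h1 : (1:ℝ) ≤ π := by linarith [Real.pi_gt_three]
    calc (1:ℝ) = Real.sqrt 1 := Real.sqrt_one.symm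
    _ ≤ Real.sqrt π := Real.sqrt_le_sqrt h1
  refine ⟨hkey, ?_, ?_⟩
  · nlinarith [hkey, hle, hsq, hr]
  · linarith [hkey, hEnn]
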